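/- In the two-sided card model, the event {X^{i+1} > Y^{j+1}} is determined by the assignment (to X or Y) of only the top i+j+1 values a_1, ..., a_{i+j+1}. -/

import Mathlib

open scoped Classical

/-- The `k`-th largest element (1-indexed) of a finite set of reals, defaulting to `0`. -/
noncomputable def kthLargest (s : Finset ℝ) (k : ℕ) : ℝ :=
  ((s.sort (· ≤ ·)).reverse).getD (k - 1) 0

/-- Characterization: `t` is less than the `(k+1)`-st largest element of `s` iff at least
`k+1` elements of `s` exceed `t`. -/
lemma kth_gt_iff (s : Finset ℝ) (k : ℕ) (hk : k < s.card) (t : ℝ) :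
    t < kthLargest s (k + 1) ↔ k + 1 ≤ (s.filter (fun y => t < y)).card := by
  classical
  set L := (s.sort (· ≤ ·)).reverse with hL
  have hlen : L.length = s.card := by simp [hL]
  have hsorted : L.Pairwise (· > ·) := by
    rw [hL, List.pairwise_reverse]
    have h1 : List.Pairwise (· ≤ ·) (s.sort (· ≤ ·)) := Finset.pairwise_sort ..
    exact (h1.and (s.sort_nodup _)).imp fun h => lt_of_le_of_ne h.1 h.2
  have hkL : k < L.length := by omega
  have hget : kthLargest s (k + 1) = L[k] := by
    simp only [kthLargest, ← hL, Nat.add_sub_cancel]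
    exact List.getD_eq_getElem L 0 hkL
  have hnd : L.Nodup := by rw [hL, List.nodup_reverse]; exact s.sort_nodup _
  have hmemL : ∀ y, y ∈ L ↔ y ∈ s := by
    intro y; rw [hL, List.mem_reverse, Finset.mem_sort]
  -- transfer finset card to list filter length
  have hcard : (s.filter (fun y => t < y)).card
      = (L.filter (fun y => decide (t < y))).length := by
    have hfnd : (L.filter (fun y => decide (t < y))).Nodup := hnd.filter _
    have htf : (L.filter (fun y => decide (t < y))).toFinset
        = s.filter (fun y => t < y) := by
      ext y
      simp only [List.mem_toFinset, List.mem_filter, Finset.mem_filter, decide_eq_true_eq,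
        hmemL]
    rw [← htf, List.toFinset_card_of_nodup hfnd]
  have hmono : ∀ (p q : ℕ) (hp : p < L.length) (hq : q < L.length), p ≤ q →
      L[q] ≤ L[p] := by
    intro p q hp hq hpq
    rcases eq_or_lt_of_le hpq with h | h
    · subst h; rfl
    · exact le_of_lt (hsorted.rel_get_of_lt (a := ⟨p, hp⟩) (b := ⟨q, hq⟩) h)
  rw [hget, hcard]
  constructor
  · -- t < L[k] → k+1 ≤ length of filter
    intro ht
    have hsub : List.Sublist ((L.take (k + 1)).filter (fun y => decide (t < y)))
        (L.filter (fun y => decide (t < y))) := (List.take_sublist _ _).filter _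
    have hall : (L.take (k + 1)).filter (fun y => decide (t < y)) = L.take (k + 1) := by
      rw [List.filter_eq_self]
      intro y hy
      rw [List.mem_iff_getElem] at hy
      obtain ⟨p, hp, rfl⟩ := hy
      have hp' : p < L.length := by
        have := List.length_take_le (k + 1) L
        omega
      rw [List.getElem_take]
      have hple : p ≤ k := by
        have : (L.take (k + 1)).length = min (k + 1) L.length := List.length_take
        omega
      have : L[k] ≤ L[p] := hmono p k hp' hkL hple
      simp only [decide_eq_true_eq]
      linarith
    have hlt : (L.take (k + 1)).length = k + 1 := by
      rw [List.length_take]; omega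
    have := hsub.length_le
    rw [hall, hlt] at this
    exact this
  · -- contrapositive
    intro hlenf
    by_contra ht
    push_neg at ht
    -- every element of drop k is ≤ L[k] ≤ t
    have hdrop : (L.drop k).filter (fun y => decide (t < y)) = [] := by
      rw [List.filter_eq_nil_iff]
      intro y hy
      rw [List.mem_iff_getElem] at hy
      obtain ⟨p, hp, rfl⟩ := hy
      rw [List.getElem_drop]
      have hkp : k + p < L.length := by
        rw [List.length_drop] at hp; omega
      have : L[k + p] ≤ L[k] := hmono k (k + p) hkL hkp (by omega)
      simp only [decide_eq_true_eq, not_lt]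
      linarith
    have hsplit : L.filter (fun y => decide (t < y))
        = (L.take k).filter (fun y => decide (t < y))
          ++ (L.drop k).filter (fun y => decide (t < y)) := by
      rw [← List.filter_append, List.take_append_drop]
    rw [hsplit, hdrop, List.append_nil] at hlenf
    have h1 : ((L.take k).filter (fun y => decide (t < y))).length ≤ (L.take k).length :=
      List.filter_sublist.length_le
    have h2 : (L.take k).length ≤ k := by rw [List.length_take]; omega
    omega

/-- In the pairing model, exactly `n` indices are assigned `true`. -/
lemma card_true_eq (n : ℕ) (pair : Fin (2 * n) → Fin (2 * n))
    (hinv : ∀ x, pair (pair x) = x)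
    (b : Fin (2 * n) → Bool) (hb : ∀ x, b (pair x) = !(b x)) :
    (Finset.univ.filter (fun x => b x = true)).card = n := by
  classical
  have key : (Finset.univ.filter (fun x => b x = true)).card
      = (Finset.univ.filter (fun x => b x = false)).card := by
    apply Finset.card_bij (fun x _ => pair x)
    · intro x hx
      simp only [Finset.mem_filter, Finset.mem_univ, true_and] at hx ⊢
      rw [hb, hx]; rfl
    · intro x hx y hy hxy
      have := congrArg pair hxy
      rwa [hinv, hinv] at this
    · intro y hy
      simp only [Finset.mem_filter, Finset.mem_univ, true_and] at hy
      refine ⟨pair y, ?_, hinv y⟩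
      simp only [Finset.mem_filter, Finset.mem_univ, true_and]
      rw [hb, hy]; rfl
  have total : (Finset.univ.filter (fun x => b x = true)).card
      + (Finset.univ.filter (fun x => ¬ (b x = true))).card = 2 * n := by
    rw [Finset.card_filter_add_card_filter_not]
    simp
  have hneg : (Finset.univ.filter (fun x : Fin (2 * n) => ¬ (b x = true)))
      = (Finset.univ.filter (fun x => b x = false)) := by
    apply Finset.filter_congr
    intro x _
    simp [Bool.not_eq_true]
  rw [hneg, ← key] at total
  omega

/-- Main characterization: `X^{i+1} > Y^{j+1}` iff at least `i+1` of the top `i+j+1` values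
are assigned to `X`. -/
lemma main_char (n i j : ℕ) (hi : i + 1 ≤ n) (hj : j + 1 ≤ n)
    (a : Fin (2 * n) → ℝ) (ha : StrictAnti a)
    (b : Fin (2 * n) → Bool)
    (hT : (Finset.univ.filter (fun x => b x = true)).card = n) :
    (kthLargest ((Finset.univ.filter (fun x => b x = true)).image a) (i + 1) >
        kthLargest ((Finset.univ.filter (fun x => b x = false)).image a) (j + 1)) ↔
      i + 1 ≤ (Finset.univ.filter
        (fun x : Fin (2 * n) => b x = true ∧ (x : ℕ) < i + j + 1)).card := by
  classical
  have hF : (Finset.univ.filter (fun x => b x = false)).card = n := by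
    have total : (Finset.univ.filter (fun x : Fin (2 * n) => b x = true)).card
        + (Finset.univ.filter (fun x : Fin (2 * n) => ¬ (b x = true))).card = 2 * n := by
      rw [Finset.card_filter_add_card_filter_not]; simp
    have hneg : (Finset.univ.filter (fun x : Fin (2 * n) => ¬ (b x = true)))
        = (Finset.univ.filter (fun x => b x = false)) := by
      apply Finset.filter_congr; intro x _; simp [Bool.not_eq_true]
    rw [hneg] at total
    omega
  set X := (Finset.univ.filter (fun x => b x = true)).image a with hX
  set Y := (Finset.univ.filter (fun x => b x = false)).image a with hY
  have hXcard : X.card = n := by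
    rw [hX, Finset.card_image_of_injective _ ha.injective, hT]
  have hYcard : Y.card = n := by
    rw [hY, Finset.card_image_of_injective _ ha.injective, hF]
  set m := i + j + 1 with hm
  have hmlt : m < 2 * n := by omega
  set c := a ⟨m, hmlt⟩ with hc
  -- count of elements of X (resp. Y) exceeding c
  have hkey : ∀ (v : Bool),
      (((Finset.univ.filter (fun x => b x = v)).image a).filter (fun y => c < y)).card
      = (Finset.univ.filter (fun x : Fin (2 * n) => b x = v ∧ (x : ℕ) < m)).card := by
    intro v
    have heq : ((Finset.univ.filter (fun x => b x = v)).image a).filter (fun y => c < y)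
        = (Finset.univ.filter (fun x : Fin (2 * n) => b x = v ∧ (x : ℕ) < m)).image a := by
      ext y
      simp only [Finset.mem_filter, Finset.mem_image, Finset.mem_univ, true_and]
      constructor
      · rintro ⟨⟨x, hxv, rfl⟩, hcy⟩
        refine ⟨x, ⟨hxv, ?_⟩, rfl⟩
        have : x < (⟨m, hmlt⟩ : Fin (2 * n)) := ha.lt_iff_gt.mp hcy
        exact this
      · rintro ⟨x, ⟨hxv, hxm⟩, rfl⟩
        refine ⟨⟨x, hxv, rfl⟩, ?_⟩
        exact ha.lt_iff_gt.mpr (by exact hxm)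
    rw [heq, Finset.card_image_of_injective _ ha.injective]
  set k := (Finset.univ.filter
      (fun x : Fin (2 * n) => b x = true ∧ (x : ℕ) < m)).card with hk
  -- counts in the top m split as k and m - k
  have hsplitm : k + (Finset.univ.filter
      (fun x : Fin (2 * n) => b x = false ∧ (x : ℕ) < m)).card = m := by
    have h1 : (Finset.univ.filter (fun x : Fin (2 * n) => (x : ℕ) < m)).card = m := by
      have : (Finset.univ.filter (fun x : Fin (2 * n) => (x : ℕ) < m))
          = Finset.Iio (⟨m, hmlt⟩ : Fin (2 * n)) := by
        ext x
        simp [Finset.mem_Iio, Fin.lt_def]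
      rw [this, Fin.card_Iio]
    have h2 : (Finset.univ.filter (fun x : Fin (2 * n) => (x : ℕ) < m)).card
        = ((Finset.univ.filter (fun x : Fin (2 * n) => (x : ℕ) < m)).filter
            (fun x => b x = true)).card
          + ((Finset.univ.filter (fun x : Fin (2 * n) => (x : ℕ) < m)).filter
            (fun x => ¬ (b x = true))).card :=
      (Finset.card_filter_add_card_filter_not _).symm
    have e1 : (Finset.univ.filter (fun x : Fin (2 * n) => (x : ℕ) < m)).filter
        (fun x => b x = true)
        = Finset.univ.filter (fun x : Fin (2 * n) => b x = true ∧ (x : ℕ) < m) := by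
      rw [Finset.filter_filter]
      apply Finset.filter_congr; intro x _; tauto
    have e2 : (Finset.univ.filter (fun x : Fin (2 * n) => (x : ℕ) < m)).filter
        (fun x => ¬ (b x = true))
        = Finset.univ.filter (fun x : Fin (2 * n) => b x = false ∧ (x : ℕ) < m) := by
      rw [Finset.filter_filter]
      apply Finset.filter_congr; intro x _; simp [Bool.not_eq_true]; tauto
    rw [e1, e2] at h2
    omega
  have hXc : (X.filter (fun y => c < y)).card = k := hkey true
  have hYc : (Y.filter (fun y => c < y)).card = m - k := by
    have := hkey false
    rw [← hY] at this
    omega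
  set β := kthLargest Y (j + 1) with hβ
  have hcharY : c < β ↔ j + 1 ≤ (Y.filter (fun y => c < y)).card :=
    kth_gt_iff Y j (by omega) c
  have hcharX : β < kthLargest X (i + 1) ↔ i + 1 ≤ (X.filter (fun y => β < y)).card :=
    kth_gt_iff X i (by omega) β
  have hkm : k ≤ m := by omega
  constructor
  · intro hgt
    by_contra hik
    push_neg at hik
    -- k ≤ i, so m - k ≥ j + 1, so c < β
    have hcβ : c < β := hcharY.mpr (by omega)
    -- then X ∩ (β, ∞) ⊆ X ∩ (c, ∞)
    have hsub : X.filter (fun y => β < y) ⊆ X.filter (fun y => c < y) := by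
      intro y hy
      simp only [Finset.mem_filter] at hy ⊢
      exact ⟨hy.1, by linarith [hy.2]⟩
    have := Finset.card_le_card hsub
    rw [hXc] at this
    have := hcharX.mp hgt
    omega
  · intro hik
    -- k ≥ i + 1, so m - k ≤ j, so ¬(c < β), i.e. β ≤ c
    have hβc : β ≤ c := by
      by_contra h
      push_neg at h
      have := hcharY.mp h
      omega
    have hsub : X.filter (fun y => c < y) ⊆ X.filter (fun y => β < y) := by
      intro y hy
      simp only [Finset.mem_filter] at hy ⊢
      exact ⟨hy.1, by linarith [hy.2]⟩
    have := Finset.card_le_card hsub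
    rw [hXc] at this
    exact hcharX.mpr (by omega)

theorem event_determined_by_top_values (n i j : ℕ)
    (hi : i + 1 ≤ n) (hj : j + 1 ≤ n)
    (a : Fin (2 * n) → ℝ) (ha : StrictAnti a)
    (pair : Fin (2 * n) → Fin (2 * n))
    (hinv : ∀ x, pair (pair x) = x) (hnf : ∀ x, pair x ≠ x)
    (f g : {f : Fin (2 * n) → Bool // ∀ x, f (pair x) = !(f x)})
    (hagree : ∀ x : Fin (2 * n), (x : ℕ) < i + j + 1 → f.1 x = g.1 x) :
    (kthLargest ((Finset.univ.filter (fun x => f.1 x = true)).image a) (i + 1) >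
        kthLargest ((Finset.univ.filter (fun x => f.1 x = false)).image a) (j + 1)) ↔
      (kthLargest ((Finset.univ.filter (fun x => g.1 x = true)).image a) (i + 1) >
        kthLargest ((Finset.univ.filter (fun x => g.1 x = false)).image a) (j + 1)) := by
  classical
  have hfcard := card_true_eq n pair hinv f.1 f.2
  have hgcard := card_true_eq n pair hinv g.1 g.2
  rw [main_char n i j hi hj a ha f.1 hfcard, main_char n i j hi hj a ha g.1 hgcard]
  have : (Finset.univ.filter (fun x : Fin (2 * n) => f.1 x = true ∧ (x : ℕ) < i + j + 1))
      = (Finset.univ.filter (fun x : Fin (2 * n) => g.1 x = true ∧ (x : ℕ) < i + j + 1)) := by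
    apply Finset.filter_congr
    intro x _
    constructor
    · rintro ⟨hfx, hxm⟩; exact ⟨(hagree x hxm) ▸ hfx, hxm⟩
    · rintro ⟨hgx, hxm⟩; exact ⟨(hagree x hxm) ▸ hgx, hxm⟩
  rw [this]
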